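/- Let u_1,…,u_N be an orthonormal basis of ℂ^N of eigenvectors of σ with σ u_j = λ_j u_j, and set E_{(i,j)} = √N |u_i⟩⟨u_j|. Let Φ be a Hermitian linear map on M_N(ℂ) with expansion Φ(A) = Σ_{α,β} c_{α,β} E_α* A E_β, where α, β range over {1,…,N}², and write α' = (α₂,α₁) for α = (α₁,α₂). Then for any probability measure m on [0,1], Φ is self-adjoint with respect to ⟨·,·⟩_m if and only if for all α,β: c_{α,β} = [(λ_{α₁},λ_{β₁})_m / (λ_{α₂},λ_{β₂})_m] · c_{β',α'}, where (x,y)_m = ∫₀¹ x^s y^{1−s} dm(s). -/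

import Mathlib

open MeasureTheory Matrix
open scoped ComplexOrder

noncomputable section

/-- The algebra of `N × N` complex matrices. -/
abbrev Mat (N : ℕ) := Matrix (Fin N) (Fin N) ℂ

variable {N : ℕ}

/-- Real power `σ^s` of a positive definite matrix, defined via the spectral decomposition. -/
noncomputable def mpow (σ : Mat N) (hσ : σ.PosDef) (s : ℝ) : Mat N :=
  (hσ.1.eigenvectorUnitary : Mat N) *
    Matrix.diagonal (fun i => ((hσ.1.eigenvalues i ^ s : ℝ) : ℂ)) *
    star (hσ.1.eigenvectorUnitary : Mat N)

/-- Complete positivity of a linear map on `M_N(ℂ)`: existence of a Kraus representation. -/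
def IsCP (Φ : Mat N →ₗ[ℂ] Mat N) : Prop :=
  ∃ (M : ℕ) (V : Fin M → Mat N), ∀ A, Φ A = ∑ j, (V j)ᴴ * A * V j

/-- The KMS inner product `⟨B,A⟩_KMS = Tr[Bᴴ σ^{1/2} A σ^{1/2}]`. -/
def kmsInner (σ : Mat N) (hσ : σ.PosDef) (B A : Mat N) : ℂ :=
  (Bᴴ * mpow σ hσ (1/2) * A * mpow σ hσ (1/2)).trace

/-- Self-adjointness with respect to the KMS inner product. -/
def IsKMSSelfAdjoint (σ : Mat N) (hσ : σ.PosDef) (Φ : Mat N →ₗ[ℂ] Mat N) : Prop :=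
  ∀ A B, kmsInner σ hσ B (Φ A) = kmsInner σ hσ (Φ B) A

/-- `M_m(A) = ∫₀¹ σ^s A σ^{1-s} dm(s)`, defined entrywise. -/
def Mm (σ : Mat N) (hσ : σ.PosDef) (m : Measure ℝ) (A : Mat N) : Mat N :=
  Matrix.of fun i j => ∫ s, (mpow σ hσ s * A * mpow σ hσ (1 - s)) i j ∂m

/-- The inner product `⟨B,A⟩_m = Tr[Bᴴ M_m(A)]`. -/
def mInner (σ : Mat N) (hσ : σ.PosDef) (m : Measure ℝ) (B A : Mat N) : ℂ :=
  (Bᴴ * Mm σ hσ m A).trace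

/-- Self-adjointness with respect to the inner product `⟨·,·⟩_m`. -/
def IsSelfAdjointWrt (σ : Mat N) (hσ : σ.PosDef) (m : Measure ℝ)
    (Φ : Mat N →ₗ[ℂ] Mat N) : Prop :=
  ∀ A B, mInner σ hσ m B (Φ A) = mInner σ hσ m (Φ B) A

/-- The `m`-weighted mean `(x,y)_m = ∫₀¹ x^s y^{1-s} dm(s)`. -/
def wmean (m : Measure ℝ) (x y : ℝ) : ℝ := ∫ s, x ^ s * y ^ (1 - s) ∂m

section Helpers

variable {m : Measure ℝ}

lemma vmv_mul_vmv (a b c d : Fin N → ℂ) :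
    vecMulVec a b * vecMulVec c d = (b ⬝ᵥ c) • vecMulVec a d := by
  ext k l
  simp only [mul_apply, vecMulVec_apply, Matrix.smul_apply, dotProduct, smul_eq_mul,
    Finset.sum_mul]
  exact Finset.sum_congr rfl fun n _ => by ring

lemma mul_vmv (M : Mat N) (a b : Fin N → ℂ) :
    M * vecMulVec a b = vecMulVec (M *ᵥ a) b := by
  ext k l
  simp only [mul_apply, vecMulVec_apply, mulVec, dotProduct, Finset.sum_mul]
  exact Finset.sum_congr rfl fun n _ => by ring

lemma vmv_mul (M : Mat N) (a b : Fin N → ℂ) :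
    vecMulVec a b * M = vecMulVec a (b ᵥ* M) := by
  ext k l
  simp only [mul_apply, vecMulVec_apply, vecMul, dotProduct, Finset.mul_sum]
  exact Finset.sum_congr rfl fun n _ => by ring

lemma trace_vmv (a b : Fin N → ℂ) : (vecMulVec a b).trace = a ⬝ᵥ b := by
  simp [Matrix.trace, Matrix.diag, vecMulVec_apply, dotProduct]

lemma conjT_vmv (a b : Fin N → ℂ) : (vecMulVec a b)ᴴ = vecMulVec (star b) (star a) := by
  ext k l
  simp [vecMulVec_apply, conjTranspose_apply, mul_comm]

lemma mpow_herm (σ : Mat N) (hσ : σ.PosDef) (s : ℝ) : (mpow σ hσ s)ᴴ = mpow σ hσ s := by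
  simp only [mpow, conjTranspose_mul, conjTranspose_mul, star_eq_conjTranspose]
  rw [conjTranspose_conjTranspose, diagonal_conjTranspose]
  simp [mul_assoc, Pi.star_def]

lemma mpow_mulVec (σ : Mat N) (hσ : σ.PosDef) (s : ℝ) (l : ℝ) (v : Fin N → ℂ)
    (hv : σ *ᵥ v = (l : ℂ) • v) :
    mpow σ hσ s *ᵥ v = ((l ^ s : ℝ) : ℂ) • v := by
  have hUU : star (hσ.1.eigenvectorUnitary : Mat N) * (hσ.1.eigenvectorUnitary : Mat N) = 1 :=
    Unitary.coe_star_mul_self _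
  have hUU' : (hσ.1.eigenvectorUnitary : Mat N) * star (hσ.1.eigenvectorUnitary : Mat N) = 1 :=
    Unitary.coe_mul_star_self _
  set w : Fin N → ℂ := star (hσ.1.eigenvectorUnitary : Mat N) *ᵥ v with hw
  have hUσ : star (hσ.1.eigenvectorUnitary : Mat N) * σ
      = Matrix.diagonal (RCLike.ofReal ∘ hσ.1.eigenvalues)
        * star (hσ.1.eigenvectorUnitary : Mat N) := by
    calc star (hσ.1.eigenvectorUnitary : Mat N) * σ
        = star (hσ.1.eigenvectorUnitary : Mat N) * ((hσ.1.eigenvectorUnitary : Mat N)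
            * Matrix.diagonal (RCLike.ofReal ∘ hσ.1.eigenvalues)
            * star (hσ.1.eigenvectorUnitary : Mat N)) := by rw [← Unitary.conjStarAlgAut_apply (S := ℂ), ← hσ.1.spectral_theorem]
      _ = _ := by rw [← Matrix.mul_assoc, ← Matrix.mul_assoc, hUU, Matrix.one_mul]
  have hDw : Matrix.diagonal (RCLike.ofReal ∘ hσ.1.eigenvalues) *ᵥ w = (l : ℂ) • w := by
    have h3 : star (hσ.1.eigenvectorUnitary : Mat N) *ᵥ (σ *ᵥ v)
        = star (hσ.1.eigenvectorUnitary : Mat N) *ᵥ ((l:ℂ) • v) := by rw [hv]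
    rw [Matrix.mulVec_smul, Matrix.mulVec_mulVec, hUσ, ← Matrix.mulVec_mulVec] at h3
    exact h3
  have key : Matrix.diagonal (fun i => ((hσ.1.eigenvalues i ^ s : ℝ) : ℂ)) *ᵥ w
      = ((l ^ s : ℝ) : ℂ) • w := by
    funext i
    rw [Matrix.mulVec_diagonal]
    by_cases h : w i = 0
    · simp [h]
    · have h1 : (hσ.1.eigenvalues i : ℂ) * w i = (l : ℂ) * w i := by
        have := congrFun hDw i
        simpa [Matrix.mulVec_diagonal] using this
      have h2 : (hσ.1.eigenvalues i : ℂ) = (l : ℂ) := mul_right_cancel₀ h h1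
      have hev : hσ.1.eigenvalues i = l := by exact_mod_cast h2
      simp [hev, Pi.smul_apply]
  calc mpow σ hσ s *ᵥ v
      = (hσ.1.eigenvectorUnitary : Mat N) *ᵥ
        (Matrix.diagonal (fun i => ((hσ.1.eigenvalues i ^ s : ℝ) : ℂ)) *ᵥ w) := by
        simp [mpow, ← Matrix.mulVec_mulVec, hw]
    _ = (hσ.1.eigenvectorUnitary : Mat N) *ᵥ (((l ^ s : ℝ) : ℂ) • w) := by rw [key]
    _ = ((l ^ s : ℝ) : ℂ) • v := by
        rw [Matrix.mulVec_smul, hw, Matrix.mulVec_mulVec, hUU', Matrix.one_mulVec]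


lemma rpow_le_max {x s : ℝ} (hx : 0 < x) (hs0 : 0 ≤ s) (hs1 : s ≤ 1) :
    x ^ s ≤ max 1 x := by
  rcases le_total x 1 with h | h
  · exact le_max_of_le_left (Real.rpow_le_one hx.le h hs0)
  · refine le_max_of_le_right ?_
    calc x ^ s ≤ x ^ (1:ℝ) := Real.rpow_le_rpow_of_exponent_le h hs1
      _ = x := Real.rpow_one x

lemma min_le_rpow {x s : ℝ} (hx : 0 < x) (hs0 : 0 ≤ s) (hs1 : s ≤ 1) :
    min 1 x ≤ x ^ s := by
  rcases le_total x 1 with h | h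
  · refine min_le_of_right_le ?_
    calc x = x ^ (1:ℝ) := (Real.rpow_one x).symm
      _ ≤ x ^ s := Real.rpow_le_rpow_of_exponent_ge hx h hs1
  · exact min_le_of_left_le (Real.one_le_rpow h hs0)

lemma cont_rpow_base {x : ℝ} (hx : 0 < x) : Continuous (fun s : ℝ => x ^ s) :=
  continuous_iff_continuousAt.mpr fun _ => Real.continuousAt_const_rpow hx.ne'

variable {m : Measure ℝ}

lemma ae_mem_Icc (hsupp : m (Set.Icc (0:ℝ) 1)ᶜ = 0) : ∀ᵐ s ∂m, s ∈ Set.Icc (0:ℝ) 1 := by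
  rw [ae_iff]
  exact hsupp

lemma integrable_rpow_mix {x y : ℝ} (hx : 0 < x) (hy : 0 < y)
    [IsProbabilityMeasure m] (hsupp : m (Set.Icc (0:ℝ) 1)ᶜ = 0) :
    Integrable (fun s => x ^ s * y ^ (1 - s)) m := by
  refine (integrable_const (max 1 x * max 1 y)).mono' ?_ ?_
  · exact ((cont_rpow_base hx).mul ((cont_rpow_base hy).comp
      (continuous_const.sub continuous_id))).aestronglyMeasurable
  · filter_upwards [ae_mem_Icc hsupp] with s hs
    have h1 : 0 ≤ x ^ s * y ^ (1 - s) :=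
      le_of_lt (mul_pos (Real.rpow_pos_of_pos hx s) (Real.rpow_pos_of_pos hy _))
    rw [Real.norm_eq_abs, abs_of_nonneg h1]
    exact mul_le_mul (rpow_le_max hx hs.1 hs.2) (rpow_le_max hy (by linarith [hs.2]) (by linarith [hs.1]))
      (Real.rpow_pos_of_pos hy _).le (le_trans zero_le_one (le_max_left _ _))

lemma wmean_pos {x y : ℝ} (hx : 0 < x) (hy : 0 < y)
    [IsProbabilityMeasure m] (hsupp : m (Set.Icc (0:ℝ) 1)ᶜ = 0) :
    0 < wmean m x y := by
  have hδ : 0 < min 1 x * min 1 y :=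
    mul_pos (lt_min one_pos hx) (lt_min one_pos hy)
  have hmono : (∫ _, min 1 x * min 1 y ∂m) ≤ ∫ s, x ^ s * y ^ (1 - s) ∂m := by
    refine integral_mono_ae (integrable_const _) (integrable_rpow_mix hx hy hsupp) ?_
    filter_upwards [ae_mem_Icc hsupp] with s hs
    exact mul_le_mul (min_le_rpow hx hs.1 hs.2) (min_le_rpow hy (by linarith [hs.2]) (by linarith [hs.1]))
      (le_of_lt (lt_min one_pos hy)) (Real.rpow_pos_of_pos hx s).le
  rw [integral_const] at hmono
  simp only [probReal_univ, measure_univ, ENNReal.toReal_one, one_smul] at hmono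
  exact lt_of_lt_of_le hδ hmono

lemma vmv_smul_smul (c1 c2 : ℂ) (a b : Fin N → ℂ) :
    vecMulVec (c1 • a) (c2 • b) = (c1 * c2) • vecMulVec a b := by
  ext k l
  simp [vecMulVec_apply, Pi.smul_apply, smul_eq_mul]
  ring

lemma sandwich (σ : Mat N) (hσ : σ.PosDef) (s l μ : ℝ) (v w : Fin N → ℂ)
    (hv : σ *ᵥ v = (l:ℂ) • v) (hw : σ *ᵥ w = (μ:ℂ) • w) :
    mpow σ hσ s * vecMulVec v (star w) * mpow σ hσ (1-s)
      = ((l ^ s * μ ^ (1-s) : ℝ) : ℂ) • vecMulVec v (star w) := by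
  rw [mul_vmv, vmv_mul, mpow_mulVec σ hσ s l v hv]
  have hstar : star w ᵥ* mpow σ hσ (1-s) = ((μ ^ (1-s) : ℝ) : ℂ) • star w := by
    rw [← mpow_herm σ hσ (1-s), ← Matrix.star_mulVec, mpow_mulVec σ hσ (1-s) μ w hw]
    rw [star_smul]
    simp [Complex.star_def, Complex.conj_ofReal]
  rw [hstar, vmv_smul_smul]
  push_cast
  ring_nf


lemma Mm_sum (σ : Mat N) (hσ : σ.PosDef) [IsProbabilityMeasure m]
    (hsupp : m (Set.Icc (0:ℝ) 1)ᶜ = 0)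
    (u : Fin N → (Fin N → ℂ)) (lam : Fin N → ℝ) (hpos : ∀ i, 0 < lam i)
    (heig : ∀ j, σ *ᵥ u j = (lam j : ℂ) • u j)
    (x : Fin N × Fin N → ℂ) :
    Mm σ hσ m (∑ p : Fin N × Fin N, x p • vecMulVec (u p.1) (star (u p.2)))
      = ∑ p : Fin N × Fin N, (x p * ((wmean m (lam p.1) (lam p.2) : ℝ) : ℂ))
          • vecMulVec (u p.1) (star (u p.2)) := by
  ext k l
  show (∫ s, (mpow σ hσ s * _ * mpow σ hσ (1 - s)) k l ∂m) = _
  have hint : ∀ s : ℝ, (mpow σ hσ s * (∑ p : Fin N × Fin N, x p • vecMulVec (u p.1) (star (u p.2)))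
      * mpow σ hσ (1 - s)) k l
      = ∑ p : Fin N × Fin N, x p * ((lam p.1 ^ s * lam p.2 ^ (1-s) : ℝ) : ℂ)
          * vecMulVec (u p.1) (star (u p.2)) k l := by
    intro s
    rw [Finset.mul_sum, Finset.sum_mul]
    rw [Matrix.sum_apply]
    refine Finset.sum_congr rfl fun p _ => ?_
    rw [Matrix.mul_smul, Matrix.smul_mul, sandwich σ hσ s (lam p.1) (lam p.2) _ _ (heig p.1) (heig p.2)]
    simp [smul_eq_mul]
    ring
  simp only [hint]
  rw [integral_finset_sum]
  · rw [Matrix.sum_apply]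
    refine Finset.sum_congr rfl fun p _ => ?_
    have : ∀ s : ℝ, x p * ((lam p.1 ^ s * lam p.2 ^ (1-s) : ℝ) : ℂ)
        * vecMulVec (u p.1) (star (u p.2)) k l
        = ((lam p.1 ^ s * lam p.2 ^ (1-s) : ℝ) : ℂ)
          * (x p * vecMulVec (u p.1) (star (u p.2)) k l) := fun s => by ring
    simp only [this]
    rw [MeasureTheory.integral_mul_const]
    have hcoe : (∫ a : ℝ, ((lam p.1 ^ a * lam p.2 ^ (1 - a) : ℝ) : ℂ) ∂m)
        = ((wmean m (lam p.1) (lam p.2) : ℝ) : ℂ) := by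
      rw [show (fun a : ℝ => ((lam p.1 ^ a * lam p.2 ^ (1 - a) : ℝ) : ℂ))
          = (fun a : ℝ => (RCLike.ofReal (lam p.1 ^ a * lam p.2 ^ (1 - a)) : ℂ)) from rfl]
      rw [integral_ofReal]
      rfl
    rw [hcoe]
    simp [wmean, smul_eq_mul]
    ring
  · intro p _
    apply Integrable.mul_const
    apply Integrable.const_mul
    exact ((integrable_rpow_mix (hpos p.1) (hpos p.2) hsupp).ofReal)

lemma vmv_mulVec (a b x : Fin N → ℂ) : vecMulVec a b *ᵥ x = (b ⬝ᵥ x) • a := by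
  funext k
  simp only [mulVec, vecMulVec_apply, dotProduct, Pi.smul_apply, smul_eq_mul,
    Finset.sum_mul]
  exact Finset.sum_congr rfl fun n _ => by ring

/-- Basis matrix units attached to an orthonormal family. -/
def bE (u : Fin N → Fin N → ℂ) (p : Fin N × Fin N) : Mat N :=
  vecMulVec (u p.1) (star (u p.2))

/-- Coefficient functional. -/
def av (u : Fin N → Fin N → ℂ) (A : Mat N) (p : Fin N × Fin N) : ℂ :=
  star (u p.1) ⬝ᵥ (A *ᵥ u p.2)

variable {u : Fin N → Fin N → ℂ}

lemma L_pos (σ : Mat N) (hσ : σ.PosDef) (lam : Fin N → ℝ)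
    (horth : ∀ i j, star (u i) ⬝ᵥ u j = if i = j then 1 else 0)
    (heig : ∀ j, σ *ᵥ u j = (lam j : ℂ) • u j) (i : Fin N) : 0 < lam i := by
  have hne : u i ≠ 0 := by
    intro h0
    have := horth i i
    rw [h0] at this
    simp at this
  have h := hσ.dotProduct_mulVec_pos hne
  rw [heig i] at h
  have hdot : star (u i) ⬝ᵥ ((lam i : ℂ) • u i) = (lam i : ℂ) := by
    rw [dotProduct_smul, horth i i]
    simp
  rw [hdot] at h
  exact_mod_cast Complex.zero_lt_real.mp h

lemma L_one (horth : ∀ i j, star (u i) ⬝ᵥ u j = if i = j then 1 else 0) :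
    ∑ i, vecMulVec (u i) (star (u i)) = (1 : Mat N) := by
  set V : Mat N := Matrix.of (fun i j => u j i) with hV
  have hVV : Vᴴ * V = 1 := by
    ext i j
    simp only [mul_apply, conjTranspose_apply, hV, Matrix.of_apply, one_apply]
    have := horth i j
    simpa [dotProduct, Pi.star_apply] using this
  have hVV' : V * Vᴴ = 1 := mul_eq_one_comm.mp hVV
  ext k l
  rw [Matrix.sum_apply]
  have := congrFun (congrFun hVV' k) l
  simp only [mul_apply, conjTranspose_apply, hV, Matrix.of_apply] at this
  simpa [vecMulVec_apply, Pi.star_apply] using this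

lemma L_dec (horth : ∀ i j, star (u i) ⬝ᵥ u j = if i = j then 1 else 0) (A : Mat N) :
    A = ∑ p : Fin N × Fin N, av u A p • bE u p := by
  have h1 := L_one horth
  calc A = (∑ i, vecMulVec (u i) (star (u i))) * A
        * (∑ i, vecMulVec (u i) (star (u i))) := by rw [h1, Matrix.one_mul, Matrix.mul_one]
    _ = ∑ i, ∑ j, (vecMulVec (u i) (star (u i)) * A * vecMulVec (u j) (star (u j))) := by
        rw [Finset.sum_mul, Finset.sum_mul]
        refine Finset.sum_congr rfl fun i _ => ?_
        rw [Finset.mul_sum]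
    _ = ∑ i, ∑ j, av u A (i, j) • bE u (i, j) := by
        refine Finset.sum_congr rfl fun i _ => Finset.sum_congr rfl fun j _ => ?_
        rw [vmv_mul, vmv_mul_vmv, ← dotProduct_mulVec]
        rfl
    _ = ∑ p : Fin N × Fin N, av u A p • bE u p :=
        (Fintype.sum_prod_type (fun p : Fin N × Fin N => av u A p • bE u p)).symm

lemma sum_mulVec' {ι : Type*} (t : Finset ι) (f : ι → Mat N) (v : Fin N → ℂ) :
    (∑ r ∈ t, f r) *ᵥ v = ∑ r ∈ t, f r *ᵥ v := by
  funext k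
  simp only [mulVec, dotProduct, Finset.sum_apply, Matrix.sum_apply, Finset.sum_mul]
  exact Finset.sum_comm

lemma dot_sum {ι : Type*} (t : Finset ι) (v : Fin N → ℂ) (f : ι → Fin N → ℂ) :
    v ⬝ᵥ (∑ r ∈ t, f r) = ∑ r ∈ t, v ⬝ᵥ f r := by
  simp only [dotProduct, Finset.sum_apply, Finset.mul_sum]
  exact Finset.sum_comm

lemma L_ext (horth : ∀ i j, star (u i) ⬝ᵥ u j = if i = j then 1 else 0)
    (x : Fin N × Fin N → ℂ) (s : Fin N × Fin N) :
    av u (∑ r : Fin N × Fin N, x r • bE u r) s = x s := by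
  unfold av bE
  rw [sum_mulVec']
  simp only [Matrix.smul_mulVec, vmv_mulVec]
  rw [dot_sum]
  have hterm : ∀ r : Fin N × Fin N,
      star (u s.1) ⬝ᵥ (x r • (star (u r.2) ⬝ᵥ u s.2) • u r.1)
        = x r * (if r.2 = s.2 then 1 else 0) * (if s.1 = r.1 then 1 else 0) := by
    intro r
    rw [dotProduct_smul, dotProduct_smul, horth, horth]
    simp only [smul_eq_mul]
    ring
  simp only [hterm]
  rw [Fintype.sum_prod_type]
  simp [Finset.sum_ite_eq, Finset.sum_ite_eq']


lemma L_IP (σ : Mat N) (hσ : σ.PosDef) [IsProbabilityMeasure m]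
    (hsupp : m (Set.Icc (0:ℝ) 1)ᶜ = 0) (lam : Fin N → ℝ)
    (horth : ∀ i j, star (u i) ⬝ᵥ u j = if i = j then 1 else 0)
    (heig : ∀ j, σ *ᵥ u j = (lam j : ℂ) • u j)
    (x y : Fin N × Fin N → ℂ) :
    mInner σ hσ m (∑ q : Fin N × Fin N, y q • bE u q) (∑ p : Fin N × Fin N, x p • bE u p)
      = ∑ p : Fin N × Fin N, (starRingEnd ℂ) (y p) * x p
          * ((wmean m (lam p.1) (lam p.2) : ℝ) : ℂ) := by
  have hpos : ∀ i, 0 < lam i := L_pos σ hσ lam horth heig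
  unfold mInner bE
  rw [Mm_sum σ hσ hsupp u lam hpos heig x]
  have hBt : (∑ q : Fin N × Fin N, y q • vecMulVec (u q.1) (star (u q.2)))ᴴ
      = ∑ q : Fin N × Fin N, (starRingEnd ℂ) (y q) • vecMulVec (u q.2) (star (u q.1)) := by
    rw [conjTranspose_sum]
    refine Finset.sum_congr rfl fun q _ => ?_
    rw [conjTranspose_smul, conjT_vmv]
    simp [Complex.star_def]
  rw [hBt, Finset.sum_mul]
  have hms : ∀ q : Fin N × Fin N,
      (starRingEnd ℂ) (y q) • vecMulVec (u q.2) (star (u q.1))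
        * (∑ r : Fin N × Fin N, (x r * ((wmean m (lam r.1) (lam r.2) : ℝ) : ℂ))
            • vecMulVec (u r.1) (star (u r.2)))
      = ∑ r : Fin N × Fin N,
          ((starRingEnd ℂ) (y q) * x r * ((wmean m (lam r.1) (lam r.2) : ℝ) : ℂ)
              * (if q.1 = r.1 then 1 else 0))
            • vecMulVec (u q.2) (star (u r.2)) := by
    intro q
    rw [Finset.mul_sum]
    refine Finset.sum_congr rfl fun r _ => ?_
    rw [Matrix.smul_mul, Matrix.mul_smul, vmv_mul_vmv, horth]
    rw [smul_smul, smul_smul]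
    congr 1
    ring
  simp only [hms]
  rw [Matrix.trace_sum]
  have htr : ∀ q : Fin N × Fin N,
      (∑ r : Fin N × Fin N,
          ((starRingEnd ℂ) (y q) * x r * ((wmean m (lam r.1) (lam r.2) : ℝ) : ℂ)
              * (if q.1 = r.1 then 1 else 0))
            • vecMulVec (u q.2) (star (u r.2))).trace
      = ∑ r : Fin N × Fin N,
          (starRingEnd ℂ) (y q) * x r * ((wmean m (lam r.1) (lam r.2) : ℝ) : ℂ)
            * ((if q.1 = r.1 then 1 else 0) * (if r.2 = q.2 then 1 else 0)) := by
    intro q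
    rw [Matrix.trace_sum]
    refine Finset.sum_congr rfl fun r _ => ?_
    rw [Matrix.trace_smul, trace_vmv, dotProduct_comm, horth]
    simp only [smul_eq_mul]
    ring
  simp only [htr]
  refine Finset.sum_congr rfl fun q _ => ?_
  rw [Fintype.sum_prod_type]
  simp only [mul_ite, mul_one, mul_zero, ite_mul, zero_mul, Finset.sum_ite_eq,
    Finset.sum_ite_eq', Finset.mem_univ, if_true]

end Helpers

/-- characterization of self-adjointness with respect to `⟨·,·⟩_m` in terms of
the coefficients of the expansion of `Φ` in the matrix-unit basis attached to an
orthonormal eigenbasis of `σ`. -/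
theorem selfAdjointWrt_iff_coeffs (N : ℕ) (hN : 2 ≤ N) (σ : Mat N) (hσ : σ.PosDef)
    (htr : σ.trace = 1) (m : Measure ℝ) (hm : IsProbabilityMeasure m)
    (hsupp : m (Set.Icc (0:ℝ) 1)ᶜ = 0)
    (u : Fin N → (Fin N → ℂ)) (lam : Fin N → ℝ)
    (horth : ∀ i j, star (u i) ⬝ᵥ u j = if i = j then 1 else 0)
    (heig : ∀ j, σ *ᵥ u j = (lam j : ℂ) • u j)
    (E : Fin N × Fin N → Mat N)
    (hE : ∀ α, E α = (Real.sqrt N : ℂ) • Matrix.vecMulVec (u α.1) (star (u α.2)))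
    (Φ : Mat N →ₗ[ℂ] Mat N) (hherm : ∀ A, Φ Aᴴ = (Φ A)ᴴ)
    (c : Fin N × Fin N → Fin N × Fin N → ℂ)
    (hrep : ∀ A, Φ A = ∑ α : Fin N × Fin N, ∑ β : Fin N × Fin N, c α β • ((E α)ᴴ * A * E β)) :
    IsSelfAdjointWrt σ hσ m Φ ↔
      ∀ α β : Fin N × Fin N,
        c α β = ((wmean m (lam α.1) (lam β.1) / wmean m (lam α.2) (lam β.2) : ℝ) : ℂ) *
          c (β.2, β.1) (α.2, α.1) := by
  haveI := hm
  have hpos : ∀ i, 0 < lam i := L_pos σ hσ lam horth heig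
  have hWpos : ∀ p : Fin N × Fin N, 0 < wmean m (lam p.1) (lam p.2) :=
    fun p => wmean_pos (hpos p.1) (hpos p.2) hsupp
  have hWne : ∀ p : Fin N × Fin N, ((wmean m (lam p.1) (lam p.2) : ℝ) : ℂ) ≠ 0 := by
    intro p
    exact_mod_cast (hWpos p).ne'
  have hNne : ((N : ℂ)) ≠ 0 := by
    simp only [ne_eq, Nat.cast_eq_zero]
    omega
  have hsqrt : ((Real.sqrt N : ℝ) : ℂ) * ((Real.sqrt N : ℝ) : ℂ) = (N : ℂ) := by
    rw [← Complex.ofReal_mul, Real.mul_self_sqrt (Nat.cast_nonneg N)]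
    simp
  -- Action of Φ on basis elements
  have hΦe : ∀ p : Fin N × Fin N, Φ (bE u p)
      = ∑ r : Fin N × Fin N, ((N : ℂ) * c (p.1, r.1) (p.2, r.2)) • bE u r := by
    intro p
    rw [hrep]
    have hterm : ∀ α β : Fin N × Fin N,
        c α β • ((E α)ᴴ * bE u p * E β)
          = (if p.2 = β.1 then (1:ℂ) else 0) •
              ((if α.1 = p.1 then (1:ℂ) else 0) •
                (((N : ℂ) * c α β) • bE u (α.2, β.2))) := by
      intro α β
      have hc : star ((Real.sqrt N : ℝ) : ℂ) = ((Real.sqrt N : ℝ) : ℂ) := by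
        simp [Complex.star_def, Complex.conj_ofReal]
      rw [hE α, hE β, conjTranspose_smul, conjT_vmv, star_star, hc,
        Matrix.smul_mul, Matrix.smul_mul, Matrix.mul_smul, smul_smul, smul_smul]
      unfold bE
      rw [vmv_mul_vmv, Matrix.smul_mul, vmv_mul_vmv, horth, horth,
        smul_smul, smul_smul, smul_smul]
      simp only [smul_smul]
      have hs : (c α β * ((Real.sqrt N : ℝ) : ℂ) * ((Real.sqrt N : ℝ) : ℂ)
            * if α.1 = p.1 then (1:ℂ) else 0) * (if p.2 = β.1 then (1:ℂ) else 0)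
          = ((if p.2 = β.1 then (1:ℂ) else 0) * if α.1 = p.1 then (1:ℂ) else 0)
            * ((N : ℂ) * c α β) := by
        rw [← hsqrt]
        ring
      rw [hs, mul_smul]
    simp only [hterm]
    have step1 : ∀ α : Fin N × Fin N,
        (∑ β : Fin N × Fin N, (if p.2 = β.1 then (1:ℂ) else 0) •
            ((if α.1 = p.1 then (1:ℂ) else 0) • (((N : ℂ) * c α β) • bE u (α.2, β.2))))
        = ∑ b2 : Fin N, (if α.1 = p.1 then (1:ℂ) else 0) •
            (((N : ℂ) * c α (p.2, b2)) • bE u (α.2, b2)) := by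
      intro α
      rw [Fintype.sum_prod_type_right]
      refine Finset.sum_congr rfl fun b2 _ => ?_
      simp [ite_smul, zero_smul, Finset.sum_ite_eq]
    refine Eq.trans (Finset.sum_congr rfl fun α _ => step1 α) ?_
    rw [Fintype.sum_prod_type_right]
    have step2 : ∀ a2 : Fin N,
        (∑ a1 : Fin N, ∑ b2 : Fin N, (if (a1, a2).1 = p.1 then (1:ℂ) else 0) •
            (((N : ℂ) * c (a1, a2) (p.2, b2)) • bE u ((a1, a2).2, b2)))
        = ∑ b2 : Fin N, ((N : ℂ) * c (p.1, a2) (p.2, b2)) • bE u (a2, b2) := by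
      intro a2
      rw [Finset.sum_comm]
      refine Finset.sum_congr rfl fun b2 _ => ?_
      simp [ite_smul, zero_smul, Finset.sum_ite_eq']
    refine Eq.trans (Finset.sum_congr rfl fun a2 _ => step2 a2) ?_
    rw [Fintype.sum_prod_type]
  -- uniqueness of coefficients
  have huniq : ∀ (x y : Fin N × Fin N → ℂ),
      (∑ r : Fin N × Fin N, x r • bE u r) = (∑ r : Fin N × Fin N, y r • bE u r) →
        ∀ s, x s = y s := by
    intro x y h s
    calc x s = av u (∑ r : Fin N × Fin N, x r • bE u r) s := (L_ext horth x s).symm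
      _ = av u (∑ r : Fin N × Fin N, y r • bE u r) s := by rw [h]
      _ = y s := L_ext horth y s
  -- Hermiticity of coefficients
  have hH : ∀ α β : Fin N × Fin N, (starRingEnd ℂ) (c α β) = c β α := by
    intro α β
    have h1 : Φ ((bE u (α.1, β.1))ᴴ) = (Φ (bE u (α.1, β.1)))ᴴ := hherm _
    have h2 : (bE u (α.1, β.1))ᴴ = bE u (β.1, α.1) := by
      unfold bE
      rw [conjT_vmv, star_star]
    rw [h2, hΦe, hΦe] at h1
    have h3 : (∑ r : Fin N × Fin N, ((N : ℂ) * c ((α.1, β.1).1, r.1) ((α.1, β.1).2, r.2))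
          • bE u r)ᴴ
        = ∑ r : Fin N × Fin N,
            ((starRingEnd ℂ) ((N : ℂ) * c (α.1, r.2) (β.1, r.1))) • bE u r := by
      rw [conjTranspose_sum]
      refine Fintype.sum_equiv (Equiv.prodComm (Fin N) (Fin N)) _ _ fun r => ?_
      unfold bE
      rw [conjTranspose_smul, conjT_vmv, star_star]
      rfl
    rw [h3] at h1
    have h4 := huniq _ _ h1 (β.2, α.2)
    simp only [_root_.map_mul, map_natCast] at h4
    have h5 : c (β.1, β.2) (α.1, α.2) = (starRingEnd ℂ) (c (α.1, α.2) (β.1, β.2)) :=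
      mul_left_cancel₀ hNne h4
    rw [Prod.mk.eta, Prod.mk.eta] at h5
    exact h5.symm
  -- Φ on general matrices
  have hΦA : ∀ A : Mat N, Φ A = ∑ r : Fin N × Fin N,
      ((N : ℂ) * ∑ p : Fin N × Fin N, av u A p * c (p.1, r.1) (p.2, r.2)) • bE u r := by
    intro A
    conv_lhs => rw [L_dec horth A]
    rw [map_sum]
    have h1 : ∀ p : Fin N × Fin N, Φ (av u A p • bE u p)
        = ∑ r : Fin N × Fin N, (av u A p * ((N : ℂ) * c (p.1, r.1) (p.2, r.2))) • bE u r := by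
      intro p
      rw [LinearMap.map_smul, hΦe, Finset.smul_sum]
      simp only [smul_smul]
    simp only [h1]
    rw [Finset.sum_comm]
    refine Finset.sum_congr rfl fun r _ => ?_
    rw [← Finset.sum_smul]
    congr 1
    rw [Finset.mul_sum]
    refine Finset.sum_congr rfl fun p _ => ?_
    ring
  -- the two evaluation formulas
  have hL : ∀ A B : Mat N, mInner σ hσ m B (Φ A)
      = ∑ r : Fin N × Fin N, (starRingEnd ℂ) (av u B r)
          * ((N : ℂ) * ∑ p : Fin N × Fin N, av u A p * c (p.1, r.1) (p.2, r.2))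
          * ((wmean m (lam r.1) (lam r.2) : ℝ) : ℂ) := by
    intro A B
    conv_lhs => rw [L_dec horth B, hΦA A]
    exact L_IP σ hσ hsupp lam horth heig _ _
  have hR : ∀ A B : Mat N, mInner σ hσ m (Φ B) A
      = ∑ r : Fin N × Fin N,
          (starRingEnd ℂ) ((N : ℂ) * ∑ q : Fin N × Fin N, av u B q * c (q.1, r.1) (q.2, r.2))
          * av u A r * ((wmean m (lam r.1) (lam r.2) : ℝ) : ℂ) := by
    intro A B
    conv_lhs => rw [L_dec horth A, hΦA B]
    exact L_IP σ hσ hsupp lam horth heig _ _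
  have hdelta : ∀ p r : Fin N × Fin N, av u (bE u p) r = if r = p then (1 : ℂ) else 0 := by
    intro p r
    have h1 : bE u p
        = ∑ t : Fin N × Fin N, (if t = p then (1 : ℂ) else 0) • bE u t := by
      simp [ite_smul, zero_smul, Finset.sum_ite_eq']
    conv_lhs => rw [h1]
    exact L_ext horth _ r
  -- the key coefficient identity, as an equivalent formulation
  have hkey : ∀ p q : Fin N × Fin N, (IsSelfAdjointWrt σ hσ m Φ) →
      c (p.1, q.1) (p.2, q.2) * ((wmean m (lam q.1) (lam q.2) : ℝ) : ℂ)
        = (starRingEnd ℂ) (c (q.1, p.1) (q.2, p.2))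
          * ((wmean m (lam p.1) (lam p.2) : ℝ) : ℂ) := by
    intro p q hSA
    have h1 := hSA (bE u p) (bE u q)
    rw [hL, hR] at h1
    simp only [hdelta, apply_ite (starRingEnd ℂ), _root_.map_one, _root_.map_zero, _root_.map_mul, map_natCast,
      map_sum, ite_mul, one_mul, zero_mul, mul_ite, mul_zero, mul_one, Finset.sum_ite_eq,
      Finset.sum_ite_eq', Finset.mem_univ, if_true] at h1
    have h2 : (N:ℂ) * (c (p.1, q.1) (p.2, q.2) * ((wmean m (lam q.1) (lam q.2) : ℝ) : ℂ))
        = (N:ℂ) * ((starRingEnd ℂ) (c (q.1, p.1) (q.2, p.2))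
            * ((wmean m (lam p.1) (lam p.2) : ℝ) : ℂ)) := by linear_combination h1
    exact mul_left_cancel₀ hNne h2
  constructor
  · -- forward direction
    intro hSA α β
    have h1 := hkey (α.1, β.1) (α.2, β.2) hSA
    dsimp only at h1
    rw [Prod.mk.eta, Prod.mk.eta] at h1
    rw [hH (α.2, α.1) (β.2, β.1)] at h1
    rw [Complex.ofReal_div, div_mul_eq_mul_div, eq_div_iff (hWne (α.2, β.2))]
    linear_combination h1
  · -- backward direction
    intro hc A B
    have hC : ∀ p q : Fin N × Fin N,
        c (p.1, q.1) (p.2, q.2) * ((wmean m (lam q.1) (lam q.2) : ℝ) : ℂ)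
          = (starRingEnd ℂ) (c (q.1, p.1) (q.2, p.2))
            * ((wmean m (lam p.1) (lam p.2) : ℝ) : ℂ) := by
      intro p q
      have h1 := hc (p.1, q.1) (p.2, q.2)
      dsimp only at h1
      rw [← hH (q.1, p.1) (q.2, p.2)] at h1
      rw [h1, Complex.ofReal_div]
      field_simp
      rw [div_eq_iff (hWne q)]
      ring
    rw [hL, hR]
    calc ∑ r : Fin N × Fin N, (starRingEnd ℂ) (av u B r)
          * ((N : ℂ) * ∑ p : Fin N × Fin N, av u A p * c (p.1, r.1) (p.2, r.2))
          * ((wmean m (lam r.1) (lam r.2) : ℝ) : ℂ)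
        = ∑ r : Fin N × Fin N, ∑ p : Fin N × Fin N,
            (starRingEnd ℂ) (av u B r) * av u A p * (N : ℂ)
              * (c (p.1, r.1) (p.2, r.2) * ((wmean m (lam r.1) (lam r.2) : ℝ) : ℂ)) := by
          refine Finset.sum_congr rfl fun r _ => ?_
          rw [Finset.mul_sum, Finset.mul_sum, Finset.sum_mul]
          refine Finset.sum_congr rfl fun p _ => ?_
          ring
      _ = ∑ r : Fin N × Fin N, ∑ p : Fin N × Fin N,
            (starRingEnd ℂ) (av u B r) * av u A p * (N : ℂ)
              * ((starRingEnd ℂ) (c (r.1, p.1) (r.2, p.2))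
                  * ((wmean m (lam p.1) (lam p.2) : ℝ) : ℂ)) := by
          refine Finset.sum_congr rfl fun r _ => Finset.sum_congr rfl fun p _ => ?_
          rw [hC p r]
      _ = ∑ p : Fin N × Fin N, ∑ r : Fin N × Fin N,
            (starRingEnd ℂ) (av u B r) * av u A p * (N : ℂ)
              * ((starRingEnd ℂ) (c (r.1, p.1) (r.2, p.2))
                  * ((wmean m (lam p.1) (lam p.2) : ℝ) : ℂ)) := Finset.sum_comm
      _ = ∑ r : Fin N × Fin N,
            (starRingEnd ℂ) ((N : ℂ) * ∑ q : Fin N × Fin N, av u B q * c (q.1, r.1) (q.2, r.2))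
              * av u A r * ((wmean m (lam r.1) (lam r.2) : ℝ) : ℂ) := by
          refine Finset.sum_congr rfl fun r _ => ?_
          rw [_root_.map_mul, map_natCast, map_sum]
          rw [Finset.mul_sum, Finset.sum_mul, Finset.sum_mul]
          refine Finset.sum_congr rfl fun q _ => ?_
          rw [_root_.map_mul]
          ring
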